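/- arXiv:1705.07477 — 3 statements merged into one kernel-verified Lean document; each statement's English description precedes it below -/
import Mathlib

section
/- For mean estimation via SGD, the update θ_{t+1} = θ_t − η(θ_t − Y_t) with i.i.d. random vectors Y_t (mean θ̂, covariance Σ) and 0 < η < 1 satisfies ‖Cov(θ_a, θ_b)‖₂ ≤ K η(1−η)^{|a−b|} for a constant K depending only on Σ and ‖θ_1 − θ̂‖, uniformly over a, b. -/
open MeasureTheory

set_option synthInstance.maxHeartbeats 1000000
set_option maxHeartbeats 1000000

/-- For the exponential-moving-average SGD recursion `θ_{t+1} = (1−η)θ_t + ηY_t` with i.i.d.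
`Y_t` of mean `θ̂` and covariance `Σ`, there is a constant `K` (depending only on the data and
`θ_1`) such that `‖Cov(θ_a, θ_b)‖₂ ≤ K η (1−η)^{|a−b|}` uniformly over `a, b`. -/
theorem sgd_mean_estimation_cov_decay {p : ℕ} {Ω : Type*} [MeasurableSpace Ω]
    (μ : Measure Ω) [IsProbabilityMeasure μ]
    (θhat : EuclideanSpace ℝ (Fin p)) (Sig : Matrix (Fin p) (Fin p) ℝ)
    (Y : ℕ → Ω → EuclideanSpace ℝ (Fin p))
    (hmeas : ∀ t, Measurable (Y t)) (hL2 : ∀ t, MemLp (Y t) 2 μ)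
    (hindep : ProbabilityTheory.iIndepFun (m := fun _ => inferInstance) Y μ)
    (hident : ∀ t, μ.map (Y t) = μ.map (Y 0))
    (hmean : ∀ t, ∫ ω, Y t ω ∂μ = θhat)
    (hcov : ∀ t i j, ∫ ω, (Y t ω i - θhat i) * (Y t ω j - θhat j) ∂μ = Sig i j)
    (θ1 : EuclideanSpace ℝ (Fin p)) :
    ∃ K : ℝ, 0 ≤ K ∧
      ∀ η : ℝ, 0 < η → η < 1 →
        ∀ θseq : ℕ → Ω → EuclideanSpace ℝ (Fin p),
          (∀ ω, θseq 1 ω = θ1) →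
          (∀ t ω, θseq (t + 1) ω = (1 - η) • θseq t ω + η • Y t ω) →
          ∀ a b : ℕ, 1 ≤ a → 1 ≤ b →
            ‖Matrix.toEuclideanCLM (𝕜 := ℝ) (Matrix.of fun i j =>
                ∫ ω, (θseq a ω i - (∫ ω', θseq a ω' ∂μ) i)
                    * (θseq b ω j - (∫ ω', θseq b ω' ∂μ) j) ∂μ)‖
              ≤ K * η * (1 - η) ^ ((a : ℤ) - b).natAbs := by
  classical
  refine ⟨‖Matrix.toEuclideanCLM (𝕜 := ℝ) Sig‖, norm_nonneg _, ?_⟩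
  intro η hη0 hη1 θseq hinit hstep a b ha hb
  have h1η : (0:ℝ) ≤ 1 - η := by linarith
  set w : ℕ → ℕ → ℝ := fun n t => η * (1-η)^(n-1-t) with hw
  -- integrability of Y
  have hYint : ∀ t, Integrable (Y t) μ := fun t => (hL2 t).integrable one_le_two
  -- representation of θseq
  have hrep : ∀ n, 1 ≤ n → ∀ ω, θseq n ω
      = ((1-η)^(n-1)) • θ1 + ∑ t ∈ Finset.Ico 1 n, (w n t) • Y t ω := by
    intro n hn
    induction n, hn using Nat.le_induction with
    | base => intro ω; simp [hinit ω]
    | succ n hn ih =>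
      intro ω
      obtain ⟨k, rfl⟩ : ∃ k, n = k + 1 := ⟨n - 1, by omega⟩
      rw [hstep, ih ω, Finset.sum_Ico_succ_top (by omega : 1 ≤ k + 1)]
      simp only [smul_add, smul_smul, Finset.smul_sum, hw]
      rw [add_assoc]
      congr 1
      · congr 1
        simp only [Nat.add_sub_cancel]
        ring
      · congr 1
        · apply Finset.sum_congr rfl
          intro t ht
          rw [Finset.mem_Ico] at ht
          have h2 : k + 1 + 1 - 1 - t = (k + 1 - 1 - t) + 1 := by omega
          rw [h2, pow_succ]
          congr 1
          ring
        · congr 1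
          simp
  -- integrability of θseq
  have hint : ∀ n, 1 ≤ n → Integrable (θseq n) μ := by
    intro n hn
    have : θseq n = fun ω => ((1-η)^(n-1)) • θ1 + ∑ t ∈ Finset.Ico 1 n, (w n t) • Y t ω :=
      funext (hrep n hn)
    rw [this]
    exact (integrable_const _).add
      (integrable_finset_sum _ fun t _ => (hYint t).smul (w n t))
  -- component representation
  have hrepi : ∀ n, 1 ≤ n → ∀ ω (i : Fin p),
      θseq n ω i = (1-η)^(n-1) * θ1 i + ∑ t ∈ Finset.Ico 1 n, w n t * Y t ω i := by
    intro n hn ω i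
    have h := congrArg (fun x : EuclideanSpace ℝ (Fin p) =>
      (EuclideanSpace.proj (𝕜 := ℝ) i) x) (hrep n hn ω)
    simpa [map_add, map_sum, smul_eq_mul] using h
  -- component means of Y
  have hYi : ∀ t (i : Fin p), ∫ ω, Y t ω i ∂μ = θhat i := by
    intro t i
    have h1 := (EuclideanSpace.proj (𝕜 := ℝ) i).integral_comp_comm (hYint t)
    simp only [PiLp.proj_apply, Function.comp_def] at h1
    rw [h1, hmean t]
  -- component integrability of Y
  have hYiInt : ∀ t (i : Fin p), Integrable (fun ω => Y t ω i) μ := by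
    intro t i
    have h := (EuclideanSpace.proj (𝕜 := ℝ) i).comp_memLp' (hL2 t)
    exact (h.integrable one_le_two)
  -- centered component functions
  set Z : ℕ → Fin p → Ω → ℝ := fun t i ω => Y t ω i - θhat i with hZ
  have hZmem : ∀ t i, MemLp (Z t i) 2 μ := by
    intro t i
    exact ((EuclideanSpace.proj (𝕜 := ℝ) i).comp_memLp' (hL2 t)).sub (memLp_const _)
  have hZint : ∀ t i, Integrable (Z t i) μ := fun t i => (hZmem t i).integrable one_le_two
  have hZzero : ∀ t i, ∫ ω, Z t i ω ∂μ = 0 := by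
    intro t i
    simp only [hZ]
    rw [integral_sub (hYiInt t i) (integrable_const _), hYi t i, integral_const]
    simp
  have hZmul : ∀ s t i j, Integrable (fun ω => Z s i ω * Z t j ω) μ := by
    intro s t i j
    have h : MemLp (Z s i • Z t j) 1 μ :=
      (hZmem t j).smul (hZmem s i)
    exact memLp_one_iff_integrable.mp h
  have hcross : ∀ s t (i j : Fin p), s ≠ t → ∫ ω, Z s i ω * Z t j ω ∂μ = 0 := by
    intro s t i j hst
    have hgi : Measurable (fun v : EuclideanSpace ℝ (Fin p) => v i - θhat i) :=
      ((EuclideanSpace.proj (𝕜 := ℝ) i).measurable).sub measurable_const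
    have hgj : Measurable (fun v : EuclideanSpace ℝ (Fin p) => v j - θhat j) :=
      ((EuclideanSpace.proj (𝕜 := ℝ) j).measurable).sub measurable_const
    have hind : ProbabilityTheory.IndepFun (Z s i) (Z t j) μ :=
      (hindep.indepFun hst).comp hgi hgj
    have h := hind.integral_mul_eq_mul_integral (hZint s i).aestronglyMeasurable (hZint t j).aestronglyMeasurable
    have h2 : ∫ ω, Z s i ω * Z t j ω ∂μ = ∫ ω, (Z s i * Z t j) ω ∂μ := rfl
    rw [h2, h, hZzero s i, hZzero t j, mul_zero]
  -- diag covariance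
  have hdiag : ∀ t (i j : Fin p), ∫ ω, Z t i ω * Z t j ω ∂μ = Sig i j := fun t i j => hcov t i j
  -- component of the mean of θseq
  have hcent : ∀ n, 1 ≤ n → ∀ ω (i : Fin p),
      θseq n ω i - (∫ ω', θseq n ω' ∂μ) i = ∑ t ∈ Finset.Ico 1 n, w n t * Z t i ω := by
    intro n hn ω i
    have h1 := (EuclideanSpace.proj (𝕜 := ℝ) i).integral_comp_comm (hint n hn)
    simp only [PiLp.proj_apply, Function.comp_def] at h1
    rw [← h1]
    have h2 : ∫ ω', θseq n ω' i ∂μ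
        = (1-η)^(n-1) * θ1 i + ∑ t ∈ Finset.Ico 1 n, w n t * θhat i := by
      calc ∫ ω', θseq n ω' i ∂μ
          = ∫ ω', ((1-η)^(n-1) * θ1 i + ∑ t ∈ Finset.Ico 1 n, w n t * Y t ω' i) ∂μ := by
            apply integral_congr_ae
            filter_upwards with ω'
            exact hrepi n hn ω' i
        _ = (1-η)^(n-1) * θ1 i + ∑ t ∈ Finset.Ico 1 n, w n t * θhat i := by
            rw [integral_add (integrable_const _)
              (integrable_finset_sum _ fun t _ => (hYiInt t i).const_mul _),
              integral_const, integral_finset_sum _ fun t _ => (hYiInt t i).const_mul _]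
            simp only [measure_univ, probReal_univ, ENNReal.toReal_one, one_smul, smul_eq_mul, one_mul]
            congr 1
            apply Finset.sum_congr rfl
            intro t _
            rw [integral_const_mul, hYi t i]
    rw [h2, hrepi n hn ω i]
    rw [add_sub_add_left_eq_sub, ← Finset.sum_sub_distrib]
    apply Finset.sum_congr rfl
    intro t _
    simp only [hZ]
    ring
  -- the covariance entry
  set m := min a b with hm
  set C : ℝ := ∑ t ∈ Finset.Ico 1 m, w a t * w b t with hC
  have hentry : ∀ i j : Fin p,
      ∫ ω, (θseq a ω i - (∫ ω', θseq a ω' ∂μ) i)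
          * (θseq b ω j - (∫ ω', θseq b ω' ∂μ) j) ∂μ = C * Sig i j := by
    intro i j
    have hinteg : ∀ (s t : ℕ),
        Integrable (fun ω => (w a s * Z s i ω) * (w b t * Z t j ω)) μ := by
      intro s t
      have := ((hZmul s t i j).const_mul (w a s * w b t))
      apply this.congr
      filter_upwards with ω
      ring
    calc ∫ ω, (θseq a ω i - (∫ ω', θseq a ω' ∂μ) i)
            * (θseq b ω j - (∫ ω', θseq b ω' ∂μ) j) ∂μ
        = ∫ ω, ∑ s ∈ Finset.Ico 1 a, ∑ t ∈ Finset.Ico 1 b,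
            (w a s * Z s i ω) * (w b t * Z t j ω) ∂μ := by
          apply integral_congr_ae
          filter_upwards with ω
          rw [hcent a ha ω i, hcent b hb ω j, Finset.sum_mul_sum]
      _ = ∑ s ∈ Finset.Ico 1 a, ∑ t ∈ Finset.Ico 1 b,
            ∫ ω, (w a s * Z s i ω) * (w b t * Z t j ω) ∂μ := by
          rw [integral_finset_sum _ fun s _ => integrable_finset_sum _ fun t _ => hinteg s t]
          exact Finset.sum_congr rfl fun s _ => integral_finset_sum _ fun t _ => hinteg s t
      _ = ∑ s ∈ Finset.Ico 1 a, ∑ t ∈ Finset.Ico 1 b,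
            w a s * w b t * (if s = t then Sig i j else 0) := by
          apply Finset.sum_congr rfl; intro s _
          apply Finset.sum_congr rfl; intro t _
          have : (fun ω => (w a s * Z s i ω) * (w b t * Z t j ω))
              = fun ω => (w a s * w b t) * (Z s i ω * Z t j ω) := by
            funext ω; ring
          rw [this, integral_const_mul]
          by_cases hst : s = t
          · subst hst; rw [hdiag s i j, if_pos rfl]
          · rw [hcross s t i j hst, if_neg hst, mul_zero]
      _ = C * Sig i j := by
          simp only [mul_ite, mul_zero]
          simp only [Finset.sum_ite_eq, Finset.sum_ite_mem]
          rw [Finset.Ico_inter_Ico]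
          simp only [max_self, hC, hm]
          rw [Finset.sum_mul]
  -- rewrite the matrix as C • Sig
  have hM : (Matrix.of fun i j =>
      ∫ ω, (θseq a ω i - (∫ ω', θseq a ω' ∂μ) i)
          * (θseq b ω j - (∫ ω', θseq b ω' ∂μ) j) ∂μ) = C • Sig := by
    ext i j
    rw [Matrix.of_apply, hentry i j, Matrix.smul_apply, smul_eq_mul]
  rw [hM, _root_.map_smul]
  rw [norm_smul C (Matrix.toEuclideanCLM (𝕜 := ℝ) Sig), Real.norm_eq_abs]
  -- nonnegativity and bound on C
  have hC0 : 0 ≤ C := by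
    apply Finset.sum_nonneg
    intro t _
    have : 0 ≤ w a t := mul_nonneg hη0.le (pow_nonneg h1η _)
    have h2 : 0 ≤ w b t := mul_nonneg hη0.le (pow_nonneg h1η _)
    exact mul_nonneg this h2
  set d := ((a : ℤ) - b).natAbs with hd
  set r : ℝ := (1-η)^2 with hr
  have hr0 : 0 ≤ r := by positivity
  have hrlt : r < 1 := by
    have : |1 - η| < 1 := by rw [abs_of_nonneg h1η]; linarith
    calc r = |1-η|^2 := by rw [sq_abs]
    _ < 1 := by nlinarith [abs_nonneg (1-η)]
  have hkey : ∀ t ∈ Finset.Ico 1 m, w a t * w b t = (η^2 * (1-η)^d) * r^(m-1-t) := by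
    intro t ht
    rw [Finset.mem_Ico] at ht
    have he : (a-1-t) + (b-1-t) = d + 2*(m-1-t) := by omega
    simp only [hw, hr]
    calc η * (1-η)^(a-1-t) * (η * (1-η)^(b-1-t))
        = η^2 * (1-η)^((a-1-t) + (b-1-t)) := by rw [pow_add]; ring
      _ = η^2 * ((1-η)^d * ((1-η)^2)^(m-1-t)) := by rw [he, pow_add, pow_mul]
      _ = (η^2 * (1-η)^d) * ((1-η)^2)^(m-1-t) := by ring
  have hCsum : C = (η^2 * (1-η)^d) * ∑ t ∈ Finset.Ico 1 m, r^(m-1-t) := by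
    rw [hC, Finset.sum_congr rfl hkey, ← Finset.mul_sum]
  -- reindex the geometric sum
  have hreindex : ∑ t ∈ Finset.Ico 1 m, r^(m-1-t) = ∑ k ∈ Finset.range (m-1), r^k := by
    apply Finset.sum_nbij' (i := fun t => m-1-t) (j := fun k => m-1-k)
    · intro t ht; rw [Finset.mem_Ico] at ht; rw [Finset.mem_range]; omega
    · intro k hk; rw [Finset.mem_range] at hk; rw [Finset.mem_Ico]; omega
    · intro t ht; rw [Finset.mem_Ico] at ht; omega
    · intro k hk; rw [Finset.mem_range] at hk; omega
    · intro t ht; rfl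
  have hgeom : ∑ k ∈ Finset.range (m-1), r^k ≤ η⁻¹ := by
    have hmul := geom_sum_mul r (m-1)
    have hS0 : 0 ≤ ∑ k ∈ Finset.range (m-1), r^k :=
      Finset.sum_nonneg fun k _ => pow_nonneg hr0 _
    have hrn : 0 ≤ r^(m-1) := pow_nonneg hr0 _
    have h1r : η ≤ 1 - r := by simp only [hr]; nlinarith
    have hS1 : (∑ k ∈ Finset.range (m-1), r^k) * (1 - r) ≤ 1 := by nlinarith
    have hS2 : (∑ k ∈ Finset.range (m-1), r^k) * η ≤ 1 :=
      le_trans (by nlinarith) hS1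
    rw [← one_div, le_div_iff₀ hη0]
    exact hS2
  have hCle : C ≤ η * (1-η)^d := by
    rw [hCsum, hreindex]
    calc η^2 * (1-η)^d * ∑ k ∈ Finset.range (m-1), r^k
        ≤ η^2 * (1-η)^d * η⁻¹ :=
          mul_le_mul_of_nonneg_left hgeom (by positivity)
      _ = η * (1-η)^d * (η * η⁻¹) := by ring
      _ = η * (1-η)^d := by rw [mul_inv_cancel₀ hη0.ne', mul_one]
  rw [abs_of_nonneg hC0]
  calc C * ‖Matrix.toEuclideanCLM (𝕜 := ℝ) Sig‖
      ≤ (η * (1-η)^d) * ‖Matrix.toEuclideanCLM (𝕜 := ℝ) Sig‖ :=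
        mul_le_mul_of_nonneg_right hCle (norm_nonneg _)
    _ = ‖Matrix.toEuclideanCLM (𝕜 := ℝ) Sig‖ * η * (1-η)^d := by ring
end

section
/- Let k : ℝ^p → ℝ be convex, differentiable, with minimizer θ̂, and suppose there exist constants with ∇k(θ̂ + tu)ᵀu ≥ m for all t ≥ t₀ and unit vectors u along any fixed direction (from local strong convexity near θ̂ with parameter λ_L and Taylor-remainder bound E). Then f(θ) = (1/2)(c + k(θ))² with c > 0 satisfies the weak strong convexity condition ∇f(θ)ᵀ(θ − θ̂) ≥ α‖θ − θ̂‖₂² for some α > 0 depending on λ_L, E, c. -/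
section Aux

variable {p : ℕ}

/-- Subgradient inequality for a convex differentiable function. -/
lemma sq_wsc_subgrad {k : EuclideanSpace ℝ (Fin p) → ℝ}
    (hk : ConvexOn ℝ Set.univ k) (hd : Differentiable ℝ k)
    (x y : EuclideanSpace ℝ (Fin p)) :
    k x + (inner ℝ (gradient k x) (y - x) : ℝ) ≤ k y := by
  set g : ℝ → ℝ := fun s => k (x + s • (y - x)) with hgdef
  have hconv : ConvexOn ℝ Set.univ g := by
    have h := hk.comp_affineMap (AffineMap.lineMap x y : ℝ →ᵃ[ℝ] EuclideanSpace ℝ (Fin p))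
    have hpre : (AffineMap.lineMap x y : ℝ →ᵃ[ℝ] EuclideanSpace ℝ (Fin p)) ⁻¹' Set.univ
        = Set.univ := Set.preimage_univ
    rw [hpre] at h
    have hgeq : g = k ∘ (AffineMap.lineMap x y : ℝ →ᵃ[ℝ] EuclideanSpace ℝ (Fin p)) := by
      funext s
      simp [hgdef, AffineMap.lineMap_apply_module', add_comm]
    rw [hgeq]; exact h
  have hcur : HasDerivAt (fun s : ℝ => x + s • (y - x)) (y - x) 0 := by
    simpa using ((hasDerivAt_id (0 : ℝ)).smul_const (y - x)).const_add x
  have hkg : HasFDerivAt k (InnerProductSpace.toDual ℝ _ (gradient k x)) x :=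
    (hd x).hasGradientAt.hasFDerivAt
  have hder : HasDerivAt g ((inner ℝ (gradient k x) (y - x) : ℝ)) 0 := by
    have h0 : x + (0 : ℝ) • (y - x) = x := by simp
    have hkg' : HasFDerivAt k (InnerProductSpace.toDual ℝ _ (gradient k x))
        (x + (0 : ℝ) • (y - x)) := by rw [h0]; exact hkg
    have := hkg'.comp_hasDerivAt 0 hcur
    simp only [Function.comp_def, InnerProductSpace.toDual_apply_apply] at this
    exact this
  have hs := hconv.le_slope_of_hasDerivAt (Set.mem_univ (0 : ℝ)) (Set.mem_univ (1 : ℝ))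
    one_pos hder
  have hg0 : g 0 = k x := by simp [hgdef]
  have hg1 : g 1 = k y := by simp [hgdef]
  rw [slope_def_field, hg0, hg1, sub_zero, div_one] at hs
  linarith

end Aux

set_option maxHeartbeats 2000000 in
/-- Weak strong convexity of the squared logistic risk: if `k` is convex, differentiable,
minimized at `θ̂`, with Hessian at `θ̂` bounded below by `λ_L > 0` and Taylor remainder of the
gradient bounded by `E‖θ − θ̂‖²`, then `f(θ) = (1/2)(c + k(θ))²` with `c > 0` satisfies
`⟪∇f(θ), θ − θ̂⟫ ≥ α ‖θ − θ̂‖²` for some `α > 0`. -/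
theorem squared_logistic_weak_strong_convexity {p : ℕ}
    (k : EuclideanSpace ℝ (Fin p) → ℝ)
    (hk : ConvexOn ℝ Set.univ k) (hk0 : ∀ θ, 0 ≤ k θ)
    (hsmooth : ContDiff ℝ 2 k)
    (θhat : EuclideanSpace ℝ (Fin p)) (hmin : ∀ θ, k θhat ≤ k θ)
    (lamL Ec : ℝ) (hlam : 0 < lamL) (hEc : 0 < Ec)
    (hhess : ∀ v : EuclideanSpace ℝ (Fin p),
      lamL * ‖v‖ ^ 2 ≤ (inner ℝ v (fderiv ℝ (fun θ => gradient k θ) θhat v) : ℝ))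
    (htaylor : ∀ θ,
      ‖gradient k θ - fderiv ℝ (fun θ' => gradient k θ') θhat (θ - θhat)‖
        ≤ Ec * ‖θ - θhat‖ ^ 2)
    (c : ℝ) (hc : 0 < c)
    (f : EuclideanSpace ℝ (Fin p) → ℝ)
    (hf : f = fun θ => (1 / 2) * (c + k θ) ^ 2) :
    ∃ α : ℝ, 0 < α ∧
      ∀ θ, α * ‖θ - θhat‖ ^ 2 ≤ (inner ℝ (gradient f θ) (θ - θhat) : ℝ) := by
  have hkdiff : Differentiable ℝ k := hsmooth.differentiable two_ne_zero
  -- gradient of f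
  have hgradf : ∀ θ, gradient f θ = (c + k θ) • gradient k θ := by
    intro θ
    have h1 : HasFDerivAt k (InnerProductSpace.toDual ℝ _ (gradient k θ)) θ :=
      (hkdiff θ).hasGradientAt.hasFDerivAt
    have h2 : HasDerivAt (fun y : ℝ => (1 / 2) * (c + y) ^ 2) (c + k θ) (k θ) := by
      have h3 : HasDerivAt (fun y : ℝ => c + y) 1 (k θ) := (hasDerivAt_id _).const_add c
      have h4 := (h3.pow 2).const_mul (1 / 2 : ℝ)
      have he : (1 / 2 : ℝ) * (((2 : ℕ) : ℝ) * (c + k θ) ^ (2 - 1) * 1) = c + k θ := by norm_num; ring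
      rw [he] at h4
      exact h4
    have h5 : HasFDerivAt f ((c + k θ) • InnerProductSpace.toDual ℝ _ (gradient k θ)) θ := by
      rw [hf]
      exact h2.comp_hasFDerivAt θ h1
    have h6 : HasGradientAt f ((c + k θ) • gradient k θ) θ := by
      rw [hasGradientAt_iff_hasFDerivAt, map_smul]
      exact h5
    exact h6.gradient
  -- near bound
  have hnear : ∀ θ, lamL * ‖θ - θhat‖ ^ 2 - Ec * ‖θ - θhat‖ ^ 2 * ‖θ - θhat‖
      ≤ (inner ℝ (gradient k θ) (θ - θhat) : ℝ) := by
    intro θ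
    set d := θ - θhat with hd
    set H := fderiv ℝ (fun θ' => gradient k θ') θhat with hH
    have h1 : lamL * ‖d‖ ^ 2 ≤ (inner ℝ (H d) d : ℝ) := by
      rw [real_inner_comm]; exact hhess d
    have h2 : |(inner ℝ (gradient k θ - H d) d : ℝ)| ≤ ‖gradient k θ - H d‖ * ‖d‖ :=
      abs_real_inner_le_norm _ _
    have h3 := htaylor θ
    have h4 : (inner ℝ (gradient k θ) d : ℝ) = inner ℝ (H d) d + inner ℝ (gradient k θ - H d) d := by
      rw [← inner_add_left]
      congr 1
      abel
    have h5 : ‖gradient k θ - H d‖ * ‖d‖ ≤ Ec * ‖d‖ ^ 2 * ‖d‖ :=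
      mul_le_mul_of_nonneg_right h3 (norm_nonneg d)
    have h6 := abs_le.mp h2
    rw [h4]
    nlinarith [h6.1]
  -- constants
  obtain ⟨r, hrdef⟩ : ∃ r : ℝ, r = lamL / (2 * Ec) := ⟨_, rfl⟩
  have hr : 0 < r := by rw [hrdef]; positivity
  have hEr : Ec * r = lamL / 2 := by
    rw [hrdef]; field_simp
  obtain ⟨μ, hμdef⟩ : ∃ μ : ℝ, μ = 3 / 16 * lamL * r ^ 2 := ⟨_, rfl⟩
  have hμ : 0 < μ := by rw [hμdef]; nlinarith [mul_pos hlam (mul_pos hr hr)]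
  refine ⟨min (c * lamL / 2) ((μ / r) ^ 2),
    lt_min (by positivity) (pow_pos (div_pos hμ hr) 2), fun θ => ?_⟩
  set d := θ - θhat with hd
  set t := ‖d‖ with ht
  rcases eq_or_lt_of_le (norm_nonneg d) with h0 | h0
  · have hd0 : d = 0 := by
      rw [← norm_eq_zero]; exact h0.symm
    have ht0 : t = 0 := h0.symm
    rw [ht0, hd0]
    simp
  · -- t > 0
    have hΔ : 0 ≤ k θ - k θhat := by linarith [hmin θ]
    have hip : k θ - k θhat ≤ (inner ℝ (gradient k θ) d : ℝ) := by
      have := sq_wsc_subgrad hk hkdiff θ θhat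
      have heq : (inner ℝ (gradient k θ) (θhat - θ) : ℝ) = -(inner ℝ (gradient k θ) d : ℝ) := by
        rw [hd, ← inner_neg_right]
        congr 1
        abel
      rw [heq] at this
      linarith
    have hfg : (inner ℝ (gradient f θ) d : ℝ) = (c + k θ) * (inner ℝ (gradient k θ) d : ℝ) := by
      rw [hgradf θ, real_inner_smul_left]
    rcases le_total t r with hcase | hcase
    · -- near case
      have hn := hnear θ
      rw [← hd, ← ht] at hn
      have h7 : Ec * t ≤ lamL / 2 := by
        calc Ec * t ≤ Ec * r := by nlinarith
          _ = lamL / 2 := hEr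
      have h8 : lamL / 2 * t ^ 2 ≤ (inner ℝ (gradient k θ) d : ℝ) := by nlinarith
      have h9 : c ≤ c + k θ := by linarith [hk0 θ]
      have h10 : (0 : ℝ) ≤ (inner ℝ (gradient k θ) d : ℝ) := le_trans hΔ hip
      calc min (c * lamL / 2) ((μ / r) ^ 2) * t ^ 2 ≤ c * lamL / 2 * t ^ 2 := by
            have := min_le_left (c * lamL / 2) ((μ / r) ^ 2)
            nlinarith
        _ = c * (lamL / 2 * t ^ 2) := by ring
        _ ≤ (c + k θ) * (inner ℝ (gradient k θ) d : ℝ) := by nlinarith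
        _ = (inner ℝ (gradient f θ) d : ℝ) := hfg.symm
    · -- far case
      obtain ⟨b, hbdef⟩ : ∃ b : ℝ, b = r / t := ⟨_, rfl⟩
      have hb0 : 0 < b := by rw [hbdef]; positivity
      have hb1 : b ≤ 1 := by
        rw [hbdef, div_le_one h0]; exact hcase
      obtain ⟨θm, hθm⟩ : ∃ z, z = θhat + (b / 2) • d := ⟨_, rfl⟩
      obtain ⟨θr, hθr⟩ : ∃ z, z = θhat + b • d := ⟨_, rfl⟩
      have hmsub : θm - θhat = (b / 2) • d := by rw [hθm]; abel
      have hmnorm : ‖θm - θhat‖ = r / 2 := by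
        rw [hmsub, norm_smul, Real.norm_eq_abs, abs_of_pos (by positivity), ← ht, hbdef]
        field_simp
        exact mul_inv_cancel₀ h0.ne'
      have h1 := hnear θm
      rw [hmnorm] at h1
      have h2 : μ = lamL * (r / 2) ^ 2 - Ec * (r / 2) ^ 2 * (r / 2) := by
        have he : Ec * (r / 2) ^ 2 * (r / 2) = Ec * r * r ^ 2 / 8 := by ring
        rw [he, hEr, hμdef]; ring
      have h3 : μ ≤ (inner ℝ (gradient k θm) (θm - θhat) : ℝ) := le_trans h2.le h1
      have h4 := sq_wsc_subgrad hk hkdiff θm θr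
      have h5 : θr - θm = θm - θhat := by
        rw [hθr, hθm]
        module
      rw [h5] at h4
      have h6 : k θhat + μ ≤ k θr := by
        have := hmin θm
        linarith
      have h7 : θr = (1 - b) • θhat + b • θ := by
        rw [hθr, hd]
        module
      have h8 : k θr ≤ (1 - b) * k θhat + b * k θ := by
        rw [h7]
        exact hk.2 (Set.mem_univ θhat) (Set.mem_univ θ) (by linarith) (le_of_lt hb0)
          (by ring)
      have h9 : μ ≤ b * (k θ - k θhat) := by nlinarith
      have h10 : μ / r * t ≤ k θ - k θhat := by
        have hbt : b * t = r := by rw [hbdef]; field_simp; exact div_self h0.ne'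
        rw [div_mul_eq_mul_div, div_le_iff₀ hr, ← hbt]
        nlinarith
      have h11 : (0 : ℝ) ≤ μ / r * t := by positivity
      have h12 : c ≤ c + k θ := by linarith [hk0 θ]
      have hkθΔ : k θ - k θhat ≤ k θ := by linarith [hk0 θhat]
      calc min (c * lamL / 2) ((μ / r) ^ 2) * t ^ 2 ≤ (μ / r) ^ 2 * t ^ 2 := by
            have := min_le_right (c * lamL / 2) ((μ / r) ^ 2)
            nlinarith
        _ = (μ / r * t) * (μ / r * t) := by ring
        _ ≤ (k θ - k θhat) * (k θ - k θhat) := by nlinarith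
        _ ≤ (c + k θ) * (inner ℝ (gradient k θ) d : ℝ) := by nlinarith
        _ = (inner ℝ (gradient f θ) d : ℝ) := hfg.symm
end

section
/- In linear regression with mini-batch sampling with replacement (batch size S), the stochastic gradient g_s(θ) = (1/S)∑_{i∈I} xᵢ(xᵢᵀθ − yᵢ) satisfies E[‖g_s(θ)‖₂² | θ] ≤ (L²(1 − 1/S) + (2/(Sn))∑‖xᵢ‖₂⁴)‖θ − θ̂‖₂² + (2/(Sn))∑‖xᵢxᵢᵀθ̂ − yᵢxᵢ‖₂², where L is the Lipschitz constant of the full gradient and θ̂ the empirical minimizer. -/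
open Finset


open Finset

private lemma sum_cons_split {n S : ℕ} {E : Type*} [AddCommMonoid E]
    (F : (Fin (S+1) → Fin n) → E) :
    ∑ I, F I = ∑ a : Fin n, ∑ I : Fin S → Fin n, F (Fin.cons a I) := by
  rw [← (Fintype.sum_equiv (Fin.consEquiv fun x => Fin n) _ F (fun q => rfl)),
    Fintype.sum_prod_type]
  rfl

private lemma card_fun_smul {n S : ℕ} {E : Type*} [AddCommMonoid E] [Module ℝ E] (c : E) :
    ∑ _I : Fin S → Fin n, c = ((n : ℝ) ^ S) • c := by
  rw [Finset.sum_const, Finset.card_univ, Fintype.card_fun, Fintype.card_fin, Fintype.card_fin,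
    ← Nat.cast_smul_eq_nsmul ℝ]
  push_cast
  rfl

private lemma cons_sum {n S : ℕ} {E : Type*} [AddCommMonoid E] (g : Fin n → E)
    (a : Fin n) (I : Fin S → Fin n) :
    ∑ j : Fin (S+1), g ((Fin.cons a I : Fin (S+1) → Fin n) j) = g a + ∑ j, g (I j) := by
  rw [Fin.sum_univ_succ]
  simp

private lemma sum_fun_sum {n : ℕ} {E : Type*} [NormedAddCommGroup E] [Module ℝ E]
    (g : Fin n → E) : ∀ S : ℕ,
    (n : ℝ) • ∑ I : Fin S → Fin n, ∑ j, g (I j) = ((S : ℝ) * (n : ℝ) ^ S) • ∑ i, g i := by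
  intro S
  induction S with
  | zero => simp
  | succ S ih =>
    rw [sum_cons_split (fun I => ∑ j, g (I j))]
    simp only [cons_sum g, Finset.sum_add_distrib, card_fun_smul, ← Finset.smul_sum]
    rw [Finset.sum_const, Finset.card_univ, Fintype.card_fin,
      ← Nat.cast_smul_eq_nsmul ℝ, smul_add, ih, smul_smul, smul_smul, ← add_smul]
    congr 1
    push_cast
    ring

private lemma sum_fun_normsq {n : ℕ} {E : Type*} [NormedAddCommGroup E] [InnerProductSpace ℝ E]
    (g : Fin n → E) : ∀ S : ℕ,
    (n : ℝ)^3 * ∑ I : Fin S → Fin n, ‖∑ j, g (I j)‖^2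
      = (S : ℝ) * (n : ℝ)^(S+2) * ∑ i, ‖g i‖^2
        + (S : ℝ) * ((S : ℝ) - 1) * (n : ℝ)^(S+1) * ‖∑ i, g i‖^2 := by
  intro S
  induction S with
  | zero => simp
  | succ S ih =>
    rw [sum_cons_split (fun I => ‖∑ j, g (I j)‖^2)]
    have hexp : ∀ (a : Fin n) (I : Fin S → Fin n),
        ‖g a + ∑ j, g (I j)‖^2
          = ‖g a‖^2 + 2 * (inner ℝ (g a) (∑ j, g (I j)) : ℝ) + ‖∑ j, g (I j)‖^2 := by
      intro a I
      exact norm_add_sq_real _ _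
    simp only [cons_sum g, hexp, Finset.sum_add_distrib]
    set A := ∑ i, ‖g i‖^2 with hA
    set B := ‖∑ i, g i‖^2 with hB
    set T := ∑ I : Fin S → Fin n, ∑ j, g (I j) with hT
    set NS := ∑ I : Fin S → Fin n, ‖∑ j, g (I j)‖^2 with hNS
    have e1 : ∑ a : Fin n, ∑ _I : Fin S → Fin n, ‖g a‖^2 = (n : ℝ)^S * A := by
      simp only [card_fun_smul, smul_eq_mul, ← Finset.mul_sum, hA]
    have e2 : (n : ℝ) * ∑ a : Fin n, ∑ I : Fin S → Fin n,
        (2 * (inner ℝ (g a) (∑ j, g (I j)) : ℝ))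
        = 2 * ((S : ℝ) * (n : ℝ)^S) * B := by
      have h1 : ∀ a : Fin n, ∑ I : Fin S → Fin n, (2 * (inner ℝ (g a) (∑ j, g (I j)) : ℝ))
          = 2 * (inner ℝ (g a) T : ℝ) := by
        intro a
        rw [← Finset.mul_sum, ← inner_sum]
      simp only [h1, ← Finset.mul_sum, ← sum_inner]
      rw [mul_left_comm, ← real_inner_smul_right, sum_fun_sum g S, real_inner_smul_right,
        real_inner_self_eq_norm_sq]
      ring
    have e3 : ∑ _a : Fin n, NS = (n : ℝ) * NS := by
      rw [Finset.sum_const, Finset.card_univ, Fintype.card_fin, nsmul_eq_mul]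
    rw [e3]
    push_cast
    linear_combination (n : ℝ)^3 * e1 + (n : ℝ)^2 * e2 + (n : ℝ) * ih

private lemma euc_sum_apply {p m : ℕ} (f : Fin m → EuclideanSpace ℝ (Fin p)) (a : Fin p) :
    (∑ i, f i) a = ∑ i, f i a := by
  induction (Finset.univ : Finset (Fin m)) using Finset.induction with
  | empty => rfl
  | insert _ _ h ih => rw [Finset.sum_insert h, Finset.sum_insert h, ← ih]; rfl

private lemma clm_apply {p n : ℕ} (x : Fin n → EuclideanSpace ℝ (Fin p))
    (δ : EuclideanSpace ℝ (Fin p)) :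
    Matrix.toEuclideanCLM (𝕜 := ℝ) ((n : ℝ)⁻¹ • ∑ i, Matrix.of (fun a b => x i a * x i b)) δ
      = (n : ℝ)⁻¹ • ∑ i, ((inner ℝ (x i) δ : ℝ) • x i) := by
  have h := Matrix.ofLp_toEuclideanCLM (𝕜 := ℝ)
    ((n : ℝ)⁻¹ • ∑ i, Matrix.of (fun a b => x i a * x i b)) δ
  apply WithLp.ofLp_injective
  rw [h]
  funext a
  simp [Matrix.mulVec, dotProduct, PiLp.inner_apply, Finset.mul_sum, Finset.sum_mul,
    Finset.sum_apply, mul_comm, mul_assoc, mul_left_comm, euc_sum_apply, PiLp.smul_apply,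
    smul_eq_mul, Matrix.sum_apply]
  rw [Finset.sum_comm]

private lemma quad_b_zero {a b : ℝ} (ha : 0 ≤ a) (h : ∀ t : ℝ, 0 ≤ a * t ^ 2 + b * t) : b = 0 := by
  have h1 := h (-b / (a + 1))
  have hpos : (0:ℝ) < a + 1 := by linarith
  have h3 : (a * (-b/(a+1))^2 + b * (-b/(a+1))) * (a+1)^2 = -b^2 * (a+1)/(a+1) := by
    field_simp
    ring
  rw [mul_div_assoc, div_self hpos.ne'] at h3
  nlinarith [sq_nonneg (a+1)]

private lemma grad_zero {p n : ℕ} (hn : 0 < n)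
    (x : Fin n → EuclideanSpace ℝ (Fin p)) (y : Fin n → ℝ)
    (θhat : EuclideanSpace ℝ (Fin p))
    (hmin : ∀ θ : EuclideanSpace ℝ (Fin p),
      (2 * n : ℝ)⁻¹ * ∑ i, ((inner ℝ (x i) θhat : ℝ) - y i) ^ 2
        ≤ (2 * n : ℝ)⁻¹ * ∑ i, ((inner ℝ (x i) θ : ℝ) - y i) ^ 2) :
    ∑ i, (((inner ℝ (x i) θhat : ℝ) - y i) • x i) = 0 := by
  set G : EuclideanSpace ℝ (Fin p) := ∑ i, (((inner ℝ (x i) θhat : ℝ) - y i) • x i) with hG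
  have key : ∀ t : ℝ, 0 ≤ (∑ i, ((inner ℝ (x i) G : ℝ))^2) * t^2
      + (2 * ∑ i, (((inner ℝ (x i) θhat : ℝ) - y i) * (inner ℝ (x i) G : ℝ))) * t := by
    intro t
    have h2n : (0:ℝ) < (2*(n:ℝ))⁻¹ := by positivity
    have h2 : ∑ i, ((inner ℝ (x i) θhat : ℝ) - y i)^2
        ≤ ∑ i, ((inner ℝ (x i) (θhat + t • G) : ℝ) - y i)^2 :=
      (mul_le_mul_iff_right₀ h2n).mp (hmin (θhat + t • G))
    have h3 : ∀ i, (inner ℝ (x i) (θhat + t • G) : ℝ)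
        = (inner ℝ (x i) θhat : ℝ) + t * (inner ℝ (x i) G : ℝ) := by
      intro i; rw [inner_add_right, real_inner_smul_right]
    have h4 : ∀ i, ((inner ℝ (x i) θhat : ℝ) + t * (inner ℝ (x i) G : ℝ) - y i)^2
        = ((inner ℝ (x i) θhat : ℝ) - y i)^2 + ((inner ℝ (x i) G : ℝ))^2 * t^2
          + 2 * ((((inner ℝ (x i) θhat : ℝ) - y i) * (inner ℝ (x i) G : ℝ)) * t) := by
      intro i; ring
    simp only [h3, h4, Finset.sum_add_distrib, ← Finset.sum_mul, ← Finset.mul_sum] at h2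
    linarith
  have hb := quad_b_zero (Finset.sum_nonneg fun i _ => sq_nonneg _) key
  have h5 : (inner ℝ G G : ℝ) = ∑ i, (((inner ℝ (x i) θhat : ℝ) - y i) * (inner ℝ (x i) G : ℝ)) := by
    nth_rewrite 1 [hG]
    rw [sum_inner]
    exact Finset.sum_congr rfl fun i _ => real_inner_smul_left _ _ _
  have h6 : (inner ℝ G G : ℝ) = 0 := by rw [h5]; linarith
  exact inner_self_eq_zero.mp h6


set_option maxHeartbeats 2000000 in
/-- Second moment of the mini-batch (with replacement, batch size `S`) stochastic gradient in
linear regression: the expectation over the uniformly random index sequence `I : Fin S → Fin n`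
of `‖(1/S)∑_{j} x_{I(j)}(x_{I(j)}ᵀθ − y_{I(j)})‖²` is at most
`(L²(1 − 1/S) + (2/(Sn))∑‖xᵢ‖⁴)‖θ − θ̂‖² + (2/(Sn))∑‖xᵢxᵢᵀθ̂ − yᵢxᵢ‖²`,
where `L = ‖(1/n)∑xᵢxᵢᵀ‖₂` and `θ̂` is the empirical least-squares minimizer. -/
theorem linear_regression_sg_second_moment {p n S : ℕ} (hn : 0 < n) (hS : 0 < S)
    (x : Fin n → EuclideanSpace ℝ (Fin p)) (y : Fin n → ℝ)
    (θhat : EuclideanSpace ℝ (Fin p))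
    (hmin : ∀ θ : EuclideanSpace ℝ (Fin p),
      (2 * n : ℝ)⁻¹ * ∑ i, ((inner ℝ (x i) θhat : ℝ) - y i) ^ 2
        ≤ (2 * n : ℝ)⁻¹ * ∑ i, ((inner ℝ (x i) θ : ℝ) - y i) ^ 2)
    (L : ℝ)
    (hL : L = ‖Matrix.toEuclideanCLM (𝕜 := ℝ)
        ((n : ℝ)⁻¹ • ∑ i, Matrix.of (fun a b => x i a * x i b))‖)
    (θ : EuclideanSpace ℝ (Fin p)) :
    ((n : ℝ) ^ S)⁻¹ * ∑ I : Fin S → Fin n,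
        ‖(S : ℝ)⁻¹ • ∑ j, (((inner ℝ (x (I j)) θ : ℝ) - y (I j)) • x (I j))‖ ^ 2
      ≤ (L ^ 2 * (1 - (S : ℝ)⁻¹) + 2 / (S * n : ℝ) * ∑ i, ‖x i‖ ^ 4) * ‖θ - θhat‖ ^ 2
        + 2 / (S * n : ℝ) * ∑ i, ‖((inner ℝ (x i) θhat : ℝ) - y i) • x i‖ ^ 2 := by
  have hn' : ((n:ℝ)) ≠ 0 := Nat.cast_ne_zero.mpr hn.ne'
  have hS' : ((S:ℝ)) ≠ 0 := Nat.cast_ne_zero.mpr hS.ne'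
  set g : Fin n → EuclideanSpace ℝ (Fin p) :=
    fun i => ((inner ℝ (x i) θ : ℝ) - y i) • x i with hg
  set h : Fin n → EuclideanSpace ℝ (Fin p) :=
    fun i => ((inner ℝ (x i) θhat : ℝ) - y i) • x i with hh
  set δ : EuclideanSpace ℝ (Fin p) := θ - θhat with hδ
  simp only [show ∀ i, (((inner ℝ (x i) θ : ℝ) - y i) • x i) = g i from fun _ => rfl,
    show ∀ i, (((inner ℝ (x i) θhat : ℝ) - y i) • x i) = h i from fun _ => rfl]
  set A : ℝ := ∑ i, ‖g i‖^2 with hA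
  set G : EuclideanSpace ℝ (Fin p) := ∑ i, g i with hGdef
  -- decomposition g i = ⟪x i, δ⟫ • x i + h i
  have hgd : ∀ i, g i = (inner ℝ (x i) δ : ℝ) • x i + h i := by
    intro i
    rw [hg, hh, hδ, inner_sub_right, ← add_smul]
    ring_nf
  -- gradient at θhat vanishes
  have hzero : ∑ i, h i = 0 := grad_zero hn x y θhat hmin
  have hGδ : G = ∑ i, ((inner ℝ (x i) δ : ℝ) • x i) := by
    rw [hGdef]
    simp only [hgd, Finset.sum_add_distrib, hzero, add_zero]
  -- the mean gradient equals the CLM applied to δ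
  have hclm : (n : ℝ)⁻¹ • G = Matrix.toEuclideanCLM (𝕜 := ℝ)
      ((n : ℝ)⁻¹ • ∑ i, Matrix.of (fun a b => x i a * x i b)) δ := by
    rw [clm_apply, hGδ]
  have hLnn : 0 ≤ L := hL ▸ norm_nonneg _
  have hGL : ‖(n : ℝ)⁻¹ • G‖^2 ≤ L^2 * ‖δ‖^2 := by
    rw [hclm, ← mul_pow]
    have := (Matrix.toEuclideanCLM (𝕜 := ℝ)
      ((n : ℝ)⁻¹ • ∑ i, Matrix.of (fun a b => x i a * x i b))).le_opNorm δ
    rw [← hL] at this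
    exact pow_le_pow_left₀ (norm_nonneg _) this 2
  -- exact expectation formula
  have hW : ∀ I : Fin S → Fin n, ‖(S:ℝ)⁻¹ • ∑ j, g (I j)‖^2
      = ((S:ℝ)⁻¹)^2 * ‖∑ j, g (I j)‖^2 := by
    intro I
    rw [norm_smul, mul_pow, Real.norm_eq_abs, sq_abs]
  have hcomb := sum_fun_normsq g S
  have hng : ‖(n:ℝ)⁻¹ • G‖^2 = ((n:ℝ)⁻¹)^2 * ‖G‖^2 := by
    rw [norm_smul, mul_pow, Real.norm_eq_abs, sq_abs]
  have hNS : (∑ I : Fin S → Fin n, ‖∑ j, g (I j)‖^2)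
      = ((S:ℝ) * (n:ℝ)^(S+2) * A + (S:ℝ)*((S:ℝ)-1)*(n:ℝ)^(S+1)*‖G‖^2) / (n:ℝ)^3 := by
    rw [eq_div_iff (by positivity), hA, hGdef]
    linear_combination hcomb
  have hE : ((n : ℝ) ^ S)⁻¹ * ∑ I : Fin S → Fin n, ‖(S:ℝ)⁻¹ • ∑ j, g (I j)‖^2
      = ((S:ℝ)*(n:ℝ))⁻¹ * A + (1 - (S:ℝ)⁻¹) * ‖(n:ℝ)⁻¹ • G‖^2 := by
    simp only [hW]
    rw [← Finset.mul_sum, hNS, hng]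
    have hnS : ((n:ℝ)^S) ≠ 0 := pow_ne_zero _ hn'
    field_simp
    ring
  -- pointwise bound on ‖g i‖²
  have hAle : A ≤ 2 * (∑ i, ‖x i‖^4) * ‖δ‖^2 + 2 * ∑ i, ‖h i‖^2 := by
    have hpt : ∀ i ∈ Finset.univ (α := Fin n),
        ‖g i‖^2 ≤ 2 * ‖x i‖^4 * ‖δ‖^2 + 2 * ‖h i‖^2 := by
      intro i _
      have h1 : ‖g i‖ ≤ ‖(inner ℝ (x i) δ : ℝ) • x i‖ + ‖h i‖ := by
        rw [hgd i]; exact norm_add_le _ _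
      have h2 : ‖(inner ℝ (x i) δ : ℝ) • x i‖ ≤ ‖x i‖^2 * ‖δ‖ := by
        rw [norm_smul, Real.norm_eq_abs]
        calc |(inner ℝ (x i) δ : ℝ)| * ‖x i‖ ≤ (‖x i‖ * ‖δ‖) * ‖x i‖ :=
              mul_le_mul_of_nonneg_right (abs_real_inner_le_norm _ _) (norm_nonneg _)
          _ = ‖x i‖^2 * ‖δ‖ := by ring
      nlinarith [norm_nonneg (g i), norm_nonneg (h i), norm_nonneg ((inner ℝ (x i) δ : ℝ) • x i),
        sq_nonneg (‖(inner ℝ (x i) δ : ℝ) • x i‖ - ‖h i‖), norm_nonneg (x i), norm_nonneg δ]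
    calc A ≤ ∑ i, (2 * ‖x i‖^4 * ‖δ‖^2 + 2 * ‖h i‖^2) := Finset.sum_le_sum hpt
      _ = 2 * (∑ i, ‖x i‖^4) * ‖δ‖^2 + 2 * ∑ i, ‖h i‖^2 := by
          rw [Finset.sum_add_distrib, ← Finset.sum_mul, ← Finset.mul_sum, ← Finset.mul_sum]
  -- final combination
  rw [hE]
  have hc1 : (0:ℝ) < ((S:ℝ)*(n:ℝ))⁻¹ := by positivity
  have h1S : (0:ℝ) ≤ 1 - (S:ℝ)⁻¹ := by
    have : (S:ℝ)⁻¹ ≤ 1 := by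
      rw [inv_le_one_iff₀]
      right
      exact_mod_cast hS
    linarith
  have hfin1 : ((S:ℝ)*(n:ℝ))⁻¹ * A
      ≤ ((S:ℝ)*(n:ℝ))⁻¹ * (2 * (∑ i, ‖x i‖^4) * ‖δ‖^2 + 2 * ∑ i, ‖h i‖^2) :=
    mul_le_mul_of_nonneg_left hAle hc1.le
  have hfin2 : (1 - (S:ℝ)⁻¹) * ‖(n:ℝ)⁻¹ • G‖^2 ≤ (1 - (S:ℝ)⁻¹) * (L^2 * ‖δ‖^2) :=
    mul_le_mul_of_nonneg_left hGL h1S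
  have hrw : 2 / ((S:ℝ) * (n:ℝ)) = 2 * ((S:ℝ)*(n:ℝ))⁻¹ := by ring
  calc ((S:ℝ)*(n:ℝ))⁻¹ * A + (1 - (S:ℝ)⁻¹) * ‖(n:ℝ)⁻¹ • G‖^2
      ≤ ((S:ℝ)*(n:ℝ))⁻¹ * (2 * (∑ i, ‖x i‖^4) * ‖δ‖^2 + 2 * ∑ i, ‖h i‖^2)
        + (1 - (S:ℝ)⁻¹) * (L^2 * ‖δ‖^2) := add_le_add hfin1 hfin2
    _ = (L ^ 2 * (1 - (S : ℝ)⁻¹) + 2 / ((S:ℝ) * (n:ℝ)) * ∑ i, ‖x i‖ ^ 4) * ‖δ‖ ^ 2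
        + 2 / ((S:ℝ) * (n:ℝ)) * ∑ i, ‖h i‖ ^ 2 := by
        rw [hrw]; ring
end
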